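/- Assume p > −1 and h_nn < 1, and fix 2 ≤ i ≤ n−1 with (1−h_ii)(1−h_nn) − h_in² > 0. Then A_{-{i,n}} < A_{-{n}} if and only if (h_1i h_in(1−h_nn) + h_in² h_1n)·p + (h_1i(1−h_nn) + h_in h_1n)² > 0. -/

import Mathlib

open Matrix Finset

noncomputable section

/-- The Gram matrix `X₋ₛᵀ X₋ₛ` of the rows of `X` outside `S`. -/
def gramOut {n d : ℕ} (X : Matrix (Fin n) (Fin d) ℝ) (S : Finset (Fin n)) :
    Matrix (Fin d) (Fin d) ℝ :=
  ∑ i ∈ Sᶜ, vecMulVec (X i) (X i)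

/-- The leave-`S`-out OLS estimator `θ̂₋ₛ = (X₋ₛᵀX₋ₛ)⁻¹ X₋ₛᵀ y₋ₛ`. -/
def olsOut {n d : ℕ} (X : Matrix (Fin n) (Fin d) ℝ) (y : Fin n → ℝ)
    (S : Finset (Fin n)) : Fin d → ℝ :=
  (gramOut X S)⁻¹ *ᵥ (∑ i ∈ Sᶜ, y i • X i)

/-- The full OLS estimator `θ̂ = (XᵀX)⁻¹ Xᵀ y`. -/
def ols {n d : ℕ} (X : Matrix (Fin n) (Fin d) ℝ) (y : Fin n → ℝ) : Fin d → ℝ :=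
  olsOut X y ∅

/-- The actual effect `A₋ₛ = x_testᵀ (θ̂₋ₛ - θ̂)` of removing the samples in `S`. -/
def effect {n d : ℕ} (X : Matrix (Fin n) (Fin d) ℝ) (y : Fin n → ℝ)
    (xt : Fin d → ℝ) (S : Finset (Fin n)) : ℝ :=
  xt ⬝ᵥ (olsOut X y S - ols X y)

/-- The (cross-)leverage score `hᵢⱼ = xᵢᵀ N⁻¹ xⱼ` with `N = XᵀX`. -/
def lev {n d : ℕ} (X : Matrix (Fin n) (Fin d) ℝ) (i j : Fin n) : ℝ :=
  X i ⬝ᵥ ((Xᵀ * X)⁻¹ *ᵥ X j)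

/-- The negative residual `rᵢ = xᵢᵀ θ̂ - yᵢ`. -/
def resid {n d : ℕ} (X : Matrix (Fin n) (Fin d) ℝ) (y : Fin n → ℝ) (i : Fin n) : ℝ :=
  X i ⬝ᵥ ols X y - y i

/-- The generated labels `y = Xθ* - e`, `e = (ε,0,…,0,pε)ᵀ` (with the index `i₁`
playing the role of sample 1 and `iₙ` that of sample n). -/
def ygen {n d : ℕ} (X : Matrix (Fin n) (Fin d) ℝ) (θstar : Fin d → ℝ) (ε p : ℝ)
    (i₁ iₙ : Fin n) : Fin n → ℝ :=
  fun i => X i ⬝ᵥ θstar - (if i = i₁ then ε else if i = iₙ then p * ε else 0)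

/-- The test point `x_test = (x₁ + p xₙ)/(p+1)`. -/
def xtest {n d : ℕ} (X : Matrix (Fin n) (Fin d) ℝ) (p : ℝ) (i₁ iₙ : Fin n) :
    Fin d → ℝ :=
  fun j => (X i₁ j + p * X iₙ j) / (p + 1)


lemma mul_vecMulVec {d : ℕ} (M : Matrix (Fin d) (Fin d) ℝ) (u v : Fin d → ℝ) :
    M * vecMulVec u v = vecMulVec (M *ᵥ u) v := by
  ext a b
  simp [Matrix.mul_apply, vecMulVec_apply, Matrix.mulVec, dotProduct, Finset.sum_mul, mul_assoc]

lemma vecMulVec_mul {d : ℕ} (M : Matrix (Fin d) (Fin d) ℝ) (u v : Fin d → ℝ) :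
    vecMulVec u v * M = vecMulVec u (Mᵀ *ᵥ v) := by
  ext a b
  simp only [Matrix.mul_apply, vecMulVec_apply, Matrix.mulVec, dotProduct,
    Matrix.transpose_apply, Finset.mul_sum]
  exact Finset.sum_congr rfl fun j _ => by ring

lemma vecMulVec_mulVec' {d : ℕ} (u v w : Fin d → ℝ) :
    vecMulVec u v *ᵥ w = (v ⬝ᵥ w) • u := by
  ext a
  simp only [Matrix.mulVec, dotProduct, vecMulVec_apply, Pi.smul_apply, smul_eq_mul,
    Finset.sum_mul, Finset.mul_sum]
  exact Finset.sum_congr rfl fun j _ => by ring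

lemma vecMulVec_smul_right {d : ℕ} (u v : Fin d → ℝ) (a : ℝ) :
    vecMulVec u (a • v) = a • vecMulVec u v := by
  ext x y; simp [vecMulVec_apply]; ring

lemma dot_sum' {d : ℕ} {ι : Type*} (v : Fin d → ℝ) (S : Finset ι) (f : ι → (Fin d → ℝ)) :
    v ⬝ᵥ ∑ j ∈ S, f j = ∑ j ∈ S, v ⬝ᵥ f j := by
  simp only [dotProduct, Finset.sum_apply, Finset.mul_sum]
  exact Finset.sum_comm

lemma mulVec_sum' {d : ℕ} {ι : Type*} (M : Matrix (Fin d) (Fin d) ℝ)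
    (S : Finset ι) (f : ι → (Fin d → ℝ)) :
    M *ᵥ ∑ j ∈ S, f j = ∑ j ∈ S, M *ᵥ f j := by
  simp only [← Matrix.mulVecLin_apply]
  exact map_sum _ _ _

lemma sum_mulVec' {d : ℕ} {ι : Type*} (S : Finset ι) (f : ι → Matrix (Fin d) (Fin d) ℝ)
    (v : Fin d → ℝ) :
    (∑ j ∈ S, f j) *ᵥ v = ∑ j ∈ S, f j *ᵥ v := by
  ext a
  simp [Matrix.mulVec, dotProduct, Matrix.sum_apply, Finset.sum_apply, Finset.sum_mul]
  exact Finset.sum_comm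
-- structural lemmas
lemma gram_eq {n d : ℕ} (X : Matrix (Fin n) (Fin d) ℝ) (S : Finset (Fin n)) :
    gramOut X S = Xᵀ * X - ∑ j ∈ S, vecMulVec (X j) (X j) := by
  have h1 : Xᵀ * X = ∑ i : Fin n, vecMulVec (X i) (X i) := by
    ext a b
    simp [Matrix.mul_apply, vecMulVec_apply, Matrix.sum_apply]
  rw [h1, eq_sub_iff_add_eq]
  exact Finset.sum_compl_add_sum S _

lemma gram_empty {n d : ℕ} (X : Matrix (Fin n) (Fin d) ℝ) :
    gramOut X (∅ : Finset (Fin n)) = Xᵀ * X := by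
  rw [gram_eq]; simp

lemma effect_eq {n d : ℕ} (X : Matrix (Fin n) (Fin d) ℝ) (y : Fin n → ℝ)
    (xt : Fin d → ℝ) (S : Finset (Fin n)) (B : Matrix (Fin d) (Fin d) ℝ)
    (hB : B * gramOut X S = 1) (hN : IsUnit (Xᵀ * X).det) :
    effect X y xt S = ∑ j ∈ S, resid X y j * (xt ⬝ᵥ (B *ᵥ X j)) := by
  have hinv : (gramOut X S)⁻¹ = B := Matrix.inv_eq_left_inv hB
  have hols : gramOut X ∅ *ᵥ ols X y = ∑ i : Fin n, y i • X i := by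
    rw [gram_empty, ols, olsOut, gram_empty, Matrix.mulVec_mulVec,
      Matrix.mul_nonsing_inv _ hN, Matrix.one_mulVec]
    simp
  have key : gramOut X S *ᵥ ols X y
      = (∑ i ∈ Sᶜ, y i • X i) - ∑ j ∈ S, resid X y j • X j := by
    rw [gram_eq, Matrix.sub_mulVec]
    have h2 : (∑ j ∈ S, vecMulVec (X j) (X j)) *ᵥ ols X y
        = ∑ j ∈ S, (X j ⬝ᵥ ols X y) • X j := by
      rw [sum_mulVec']
      exact Finset.sum_congr rfl fun j _ => vecMulVec_mulVec' _ _ _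
    rw [h2]
    have h3 : (Xᵀ * X) *ᵥ ols X y = ∑ i : Fin n, y i • X i := by
      rw [← gram_empty]; exact hols
    rw [h3]
    have h4 : (∑ i : Fin n, y i • X i)
        = (∑ i ∈ Sᶜ, y i • X i) + ∑ j ∈ S, y j • X j :=
      (Finset.sum_compl_add_sum S _).symm
    rw [h4]
    simp only [resid, sub_smul]
    rw [Finset.sum_sub_distrib]
    abel
  have h5 : olsOut X y S = ols X y + B *ᵥ (∑ j ∈ S, resid X y j • X j) := by
    rw [olsOut, hinv]
    have : (∑ i ∈ Sᶜ, y i • X i)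
        = gramOut X S *ᵥ ols X y + ∑ j ∈ S, resid X y j • X j := by
      rw [key]; abel
    rw [this, Matrix.mulVec_add, Matrix.mulVec_mulVec, hB, Matrix.one_mulVec]
  rw [effect, h5]
  have : ols X y + B *ᵥ (∑ j ∈ S, resid X y j • X j) - ols X y
      = B *ᵥ (∑ j ∈ S, resid X y j • X j) := by abel
  rw [this]
  rw [mulVec_sum']
  rw [dot_sum']
  exact Finset.sum_congr rfl fun j _ => by rw [Matrix.mulVec_smul, dotProduct_smul]; simp
lemma vecMulVec_transpose' {d : ℕ} (u v : Fin d → ℝ) :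
    (vecMulVec u v)ᵀ = vecMulVec v u := by
  ext a b; simp [vecMulVec_apply, mul_comm]

lemma gram_univ {n d : ℕ} (X : Matrix (Fin n) (Fin d) ℝ) :
    Xᵀ * X = ∑ i : Fin n, vecMulVec (X i) (X i) := by
  ext a b
  simp [Matrix.mul_apply, vecMulVec_apply, Matrix.sum_apply]

lemma eff1_compact (b1 t ε p : ℝ) (htne : 1 - t ≠ 0) (hpne : p + 1 ≠ 0) :
    (p * ε - ε * b1 - p * ε * t) * ((b1 + p * t) / (p + 1)
          + (1 - t)⁻¹ * t * ((b1 + p * t) / (p + 1)))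
    = ε * (p - b1 - p * t) * (b1 + p * t) / ((p + 1) * (1 - t)) := by
  field_simp
  ring

lemma eff2_compact (a1 b1 g s t ε p D : ℝ) (hDne : D ≠ 0) (hpne : p + 1 ≠ 0) :
    ((-(ε * a1) - p * ε * g) * ((a1 + p * g) / (p + 1)
          + D⁻¹ * (1 - t) * s * ((a1 + p * g) / (p + 1))
          + D⁻¹ * g * g * ((a1 + p * g) / (p + 1))
          + D⁻¹ * g * s * ((b1 + p * t) / (p + 1))
          + D⁻¹ * (1 - s) * g * ((b1 + p * t) / (p + 1)))
      + (p * ε - ε * b1 - p * ε * t) * ((b1 + p * t) / (p + 1)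
          + D⁻¹ * (1 - t) * g * ((a1 + p * g) / (p + 1))
          + D⁻¹ * g * t * ((a1 + p * g) / (p + 1))
          + D⁻¹ * g * g * ((b1 + p * t) / (p + 1))
          + D⁻¹ * (1 - s) * t * ((b1 + p * t) / (p + 1))))
    = ε * (-(a1 + p * g) * ((a1 + p * g) * (1 - t) + (b1 + p * t) * g)
        + (p - b1 - p * t) * ((a1 + p * g) * g + (b1 + p * t) * (1 - s))
        + (-(a1 + p * g) * (a1 + p * g) + (p - b1 - p * t) * (b1 + p * t)) * (D - ((1-s)*(1-t) - g^2)))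
      / ((p + 1) * D) := by
  field_simp
  ring

lemma key_compact (a1 b1 g s t ε p : ℝ)
    (hDne : (1 - s) * (1 - t) - g ^ 2 ≠ 0) (htne : 1 - t ≠ 0) (hpne : p + 1 ≠ 0) :
    ε * (p - b1 - p * t) * (b1 + p * t) / ((p + 1) * (1 - t))
      - ε * (-(a1 + p * g) * ((a1 + p * g) * (1 - t) + (b1 + p * t) * g)
        + (p - b1 - p * t) * ((a1 + p * g) * g + (b1 + p * t) * (1 - s))
        + (-(a1 + p * g) * (a1 + p * g) + (p - b1 - p * t) * (b1 + p * t)) * 0)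
      / ((p + 1) * ((1 - s) * (1 - t) - g ^ 2))
    = (ε / ((p + 1) * (1 - t) * ((1 - s) * (1 - t) - g ^ 2)))
        * ((a1 * g * (1 - t) + g ^ 2 * b1) * p + (a1 * (1 - t) + g * b1) ^ 2) := by
  rw [div_sub_div _ _ (mul_ne_zero hpne htne) (mul_ne_zero hpne hDne), div_mul_eq_mul_div,
    div_eq_div_iff (mul_ne_zero (mul_ne_zero hpne htne) (mul_ne_zero hpne hDne))
      (mul_ne_zero (mul_ne_zero hpne htne) hDne)]
  ring


set_option maxHeartbeats 400000

/-- Lemma B.3: assuming `p > -1`, `hₙₙ < 1`, and for a fixed middle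
index `i` with `(1-hᵢᵢ)(1-hₙₙ) - hᵢₙ² > 0`, we have `A₋{i,n} < A₋{n}` if and only if
`(h₁ᵢhᵢₙ(1-hₙₙ) + hᵢₙ²h₁ₙ)·p + (h₁ᵢ(1-hₙₙ) + hᵢₙh₁ₙ)² > 0`. -/
theorem cancellation_condition_middle_iff
    (n d : ℕ) (hn : 3 ≤ n) (hd : 0 < d)
    (X : Matrix (Fin n) (Fin d) ℝ) (θstar : Fin d → ℝ) (ε : ℝ) (hε : 0 < ε)
    (p : ℝ) (hp : -1 < p)
    (i₁ iₙ : Fin n) (hi₁ : (i₁ : ℕ) = 0) (hiₙ : (iₙ : ℕ) = n - 1)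
    (hone : ∀ i, X i ⟨0, hd⟩ = 1)
    (hN : IsUnit (Xᵀ * X).det)
    (hmid : IsUnit (∑ i ∈ ({i₁, iₙ} : Finset (Fin n))ᶜ, vecMulVec (X i) (X i)).det)
    (houtₙ : IsUnit (gramOut X {iₙ}).det)
    (i : Fin n) (hii₁ : i ≠ i₁) (hiiₙ : i ≠ iₙ)
    (houtᵢₙ : IsUnit (gramOut X {i, iₙ}).det)
    (hnn : lev X iₙ iₙ < 1)
    (hD : 0 < (1 - lev X i i) * (1 - lev X iₙ iₙ) - (lev X i iₙ) ^ 2) :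
    effect X (ygen X θstar ε p i₁ iₙ) (xtest X p i₁ iₙ) {i, iₙ} <
      effect X (ygen X θstar ε p i₁ iₙ) (xtest X p i₁ iₙ) {iₙ} ↔
    0 < (lev X i₁ i * lev X i iₙ * (1 - lev X iₙ iₙ) +
        (lev X i iₙ) ^ 2 * lev X i₁ iₙ) * p +
      (lev X i₁ i * (1 - lev X iₙ iₙ) + lev X i iₙ * lev X i₁ iₙ) ^ 2 := by
  have h1n : i₁ ≠ iₙ := by
    intro h; rw [h] at hi₁; omega
  set N := Xᵀ * X with hNdef
  have hNsymm : Nᵀ = N := by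
    rw [hNdef, Matrix.transpose_mul, Matrix.transpose_transpose]
  have hNi : N⁻¹ * N = 1 := Matrix.nonsing_inv_mul _ hN
  have hNi' : N * N⁻¹ = 1 := Matrix.mul_nonsing_inv _ hN
  set u : Fin n → (Fin d → ℝ) := fun j => N⁻¹ *ᵥ X j with hu
  have hNisymm : (N⁻¹)ᵀ = N⁻¹ := by
    rw [Matrix.transpose_nonsing_inv, hNsymm]
  have hNu : ∀ j, N *ᵥ u j = X j := fun j => by
    rw [hu]; simp only [Matrix.mulVec_mulVec, hNi', Matrix.one_mulVec]
  have hlev : ∀ j k, lev X j k = X j ⬝ᵥ u k := fun j k => rfl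
  have hdot : ∀ j k, u j ⬝ᵥ X k = lev X j k := by
    intro j k
    rw [hlev, Matrix.dotProduct_mulVec]
    congr 1
    rw [← hNisymm, Matrix.vecMul_transpose]
  have hsym : ∀ j k, lev X j k = lev X k j := by
    intro j k
    rw [← hdot j k, dotProduct_comm, hlev]
  set y := ygen X θstar ε p i₁ iₙ with hy
  -- ols value
  have hsum_e : (∑ j : Fin n, y j • X j)
      = N *ᵥ θstar - (ε • X i₁ + (p * ε) • X iₙ) := by
    have h1 : ∀ j : Fin n, y j • X j
        = (X j ⬝ᵥ θstar) • X j
          - ((if j = i₁ then ε else 0) • X i₁ + (if j = iₙ then p * ε else 0) • X iₙ) := by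
      intro j
      rcases eq_or_ne j i₁ with h | h
      · subst h
        simp only [hy, ygen, if_pos rfl, if_neg h1n, sub_smul]
        simp
      rcases eq_or_ne j iₙ with h2 | h2
      · subst h2
        simp only [hy, ygen, if_neg h, sub_smul, if_pos rfl]
        simp
      · simp only [hy, ygen, if_neg h, if_neg h2, sub_smul]
        simp
    rw [Finset.sum_congr rfl fun j _ => h1 j]
    rw [Finset.sum_sub_distrib, Finset.sum_add_distrib]
    rw [← Finset.sum_smul, ← Finset.sum_smul]
    rw [Finset.sum_ite_eq' Finset.univ i₁ fun _ => ε,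
      Finset.sum_ite_eq' Finset.univ iₙ fun _ => p * ε]
    simp only [Finset.mem_univ, if_pos]
    congr 1
    have h2 : ∀ j : Fin n, (X j ⬝ᵥ θstar) • X j = vecMulVec (X j) (X j) *ᵥ θstar :=
      fun j => (vecMulVec_mulVec' _ _ _).symm
    rw [Finset.sum_congr rfl fun j _ => h2 j, ← sum_mulVec', ← gram_univ]
  have hols_val : ols X y = θstar - (ε • u i₁ + (p * ε) • u iₙ) := by
    rw [ols, olsOut, gram_empty]
    rw [show ((∅ : Finset (Fin n))ᶜ) = Finset.univ from by simp]
    rw [hsum_e, Matrix.mulVec_sub, Matrix.mulVec_add, Matrix.mulVec_smul,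
      Matrix.mulVec_smul, Matrix.mulVec_mulVec, hNi, Matrix.one_mulVec]
  have hres : ∀ j, resid X y j
      = (if j = i₁ then ε else if j = iₙ then p * ε else 0)
        - ε * lev X j i₁ - p * ε * lev X j iₙ := by
    intro j
    rw [resid, hols_val, dotProduct_sub, dotProduct_add, dotProduct_smul,
      dotProduct_smul]
    rw [hy]
    show X j ⬝ᵥ θstar - (ε • (X j ⬝ᵥ u i₁) + (p*ε) • (X j ⬝ᵥ u iₙ))
        - (X j ⬝ᵥ θstar - _) = _
    rw [← hlev, ← hlev]
    simp only [smul_eq_mul]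
    ring
  -- abbreviations for leverage scores
  set a1 := lev X i₁ i with ha1
  set b1 := lev X i₁ iₙ with hb1
  set g := lev X i iₙ with hg
  set s := lev X i i with hs
  set t := lev X iₙ iₙ with ht
  have ht1 : (0:ℝ) < 1 - t := by linarith
  have htne : (1:ℝ) - t ≠ 0 := ne_of_gt ht1
  have hp1 : (0:ℝ) < p + 1 := by linarith
  have hp1ne : p + 1 ≠ 0 := ne_of_gt hp1
  have hDne : (1 - s) * (1 - t) - g ^ 2 ≠ 0 := ne_of_gt hD
  -- dot products with the test point
  have hxt : ∀ v : Fin d → ℝ,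
      xtest X p i₁ iₙ ⬝ᵥ v = (X i₁ ⬝ᵥ v + p * (X iₙ ⬝ᵥ v)) / (p + 1) := by
    intro v
    simp only [xtest, dotProduct, div_mul_eq_mul_div, ← Finset.sum_div, add_mul,
      Finset.sum_add_distrib, Finset.mul_sum, mul_assoc]
  have hxtu : ∀ j, xtest X p i₁ iₙ ⬝ᵥ u j = (lev X i₁ j + p * lev X iₙ j) / (p + 1) := by
    intro j; rw [hxt, ← hlev, ← hlev]
  -- the rank-one updated inverse
  set B₁ := N⁻¹ + (1 - t)⁻¹ • vecMulVec (u iₙ) (u iₙ) with hB₁def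
  have hB₁ : B₁ * gramOut X {iₙ} = 1 := by
    rw [gram_eq, Finset.sum_singleton, hB₁def]
    rw [mul_sub, add_mul, add_mul, hNi]
    rw [mul_vecMulVec]
    rw [smul_mul_assoc, smul_mul_assoc, vecMulVec_mul, vecMulVec_mul, hNsymm,
      hNu, vecMulVec_transpose', vecMulVec_mulVec', show N⁻¹ *ᵥ X iₙ = u iₙ from rfl,
      show X iₙ ⬝ᵥ u iₙ = t from (hlev iₙ iₙ).symm, vecMulVec_smul_right]
    have hc : (1-t)⁻¹ * (1 - t) = 1 := inv_mul_cancel₀ htne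
    match_scalars
    · ring
    · linear_combination hc
  have heff1 : effect X y (xtest X p i₁ iₙ) {iₙ}
      = resid X y iₙ * ((lev X i₁ iₙ + p * lev X iₙ iₙ) / (p + 1)
          + (1-t)⁻¹ * t * ((lev X i₁ iₙ + p * lev X iₙ iₙ) / (p + 1))) := by
    rw [effect_eq X y _ _ B₁ hB₁ hN, Finset.sum_singleton]
    congr 1
    rw [hB₁def, Matrix.add_mulVec, Matrix.smul_mulVec, vecMulVec_mulVec',
      hdot, dotProduct_add, dotProduct_smul, dotProduct_smul, hxtu]
    simp only [smul_eq_mul, ← ht]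
    ring
  -- fold symmetric leverage scores
  have e1 : lev X i i₁ = a1 := (hsym i i₁).trans ha1.symm
  have e2 : lev X iₙ i₁ = b1 := (hsym iₙ i₁).trans hb1.symm
  have e3 : lev X iₙ i = g := (hsym iₙ i).trans hg.symm
  have hn1 : iₙ ≠ i₁ := h1n.symm
  -- residual values
  have hri : resid X y i = -(ε * a1) - p * ε * g := by
    rw [hres i, if_neg hii₁, if_neg hiiₙ, e1, ← hg]; ring
  have hrn : resid X y iₙ = p * ε - ε * b1 - p * ε * t := by
    rw [hres iₙ, if_neg hn1, if_pos rfl, e2, ← ht]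
  -- the rank-two updated inverse
  have hA : ∀ c, N⁻¹ * vecMulVec (X c) (X c) = vecMulVec (u c) (X c) := fun c =>
    _root_.mul_vecMulVec _ _ _
  have hB : ∀ a b : Fin n, vecMulVec (u a) (u b) * N = vecMulVec (u a) (X b) := by
    intro a b; rw [_root_.vecMulVec_mul, hNsymm, hNu]
  have hC : ∀ a b c : Fin n, vecMulVec (u a) (u b) * vecMulVec (X c) (X c)
      = lev X c b • vecMulVec (u a) (X c) := by
    intro a b c
    rw [_root_.vecMulVec_mul, vecMulVec_transpose', vecMulVec_mulVec',
      show X c ⬝ᵥ u b = lev X c b from (hlev c b).symm, vecMulVec_smul_right]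
  set D := (1 - s) * (1 - t) - g ^ 2 with hDdef
  set B₂ := N⁻¹ + (D⁻¹ * (1 - t)) • vecMulVec (u i) (u i)
      + (D⁻¹ * g) • vecMulVec (u i) (u iₙ)
      + (D⁻¹ * g) • vecMulVec (u iₙ) (u i)
      + (D⁻¹ * (1 - s)) • vecMulVec (u iₙ) (u iₙ) with hB₂def
  have hgram2 : gramOut X {i, iₙ}
      = N - (vecMulVec (X i) (X i) + vecMulVec (X iₙ) (X iₙ)) := by
    rw [gram_eq, Finset.sum_insert (by simp [hiiₙ]), Finset.sum_singleton]
  have hB₂ : B₂ * gramOut X {i, iₙ} = 1 := by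
    rw [hgram2, hB₂def]
    simp only [mul_sub, mul_add, add_mul, smul_mul_assoc, hA, hB, hC, hNi,
      smul_smul, e3, ← hg, ← hs, ← ht]
    match_scalars <;> field_simp <;> ring
  -- the two effects
  have heff2 : effect X y (xtest X p i₁ iₙ) {i, iₙ}
      = resid X y i * ((a1 + p * g) / (p + 1)
          + D⁻¹ * (1 - t) * s * ((a1 + p * g) / (p + 1))
          + D⁻¹ * g * g * ((a1 + p * g) / (p + 1))
          + D⁻¹ * g * s * ((b1 + p * t) / (p + 1))
          + D⁻¹ * (1 - s) * g * ((b1 + p * t) / (p + 1)))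
      + resid X y iₙ * ((b1 + p * t) / (p + 1)
          + D⁻¹ * (1 - t) * g * ((a1 + p * g) / (p + 1))
          + D⁻¹ * g * t * ((a1 + p * g) / (p + 1))
          + D⁻¹ * g * g * ((b1 + p * t) / (p + 1))
          + D⁻¹ * (1 - s) * t * ((b1 + p * t) / (p + 1))) := by
    rw [effect_eq X y _ _ B₂ hB₂ hN,
      Finset.sum_insert (by simp [hiiₙ]), Finset.sum_singleton]
    congr 2
    · rw [hB₂def]
      simp only [Matrix.add_mulVec, Matrix.smul_mulVec, vecMulVec_mulVec',
        hdot, dotProduct_add, dotProduct_smul, hxtu, smul_eq_mul,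
        show ∀ j, xtest X p i₁ iₙ ⬝ᵥ N⁻¹ *ᵥ X j = (lev X i₁ j + p * lev X iₙ j) / (p + 1) from hxtu,
        e3, ← hg, ← hs, ← ht, ← ha1, ← hb1]
      ring
    · rw [hB₂def]
      simp only [Matrix.add_mulVec, Matrix.smul_mulVec, vecMulVec_mulVec',
        hdot, dotProduct_add, dotProduct_smul, hxtu, smul_eq_mul,
        show ∀ j, xtest X p i₁ iₙ ⬝ᵥ N⁻¹ *ᵥ X j = (lev X i₁ j + p * lev X iₙ j) / (p + 1) from hxtu,
        e3, ← hg, ← hs, ← ht, ← ha1, ← hb1]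
      ring
  have heff1' : effect X y (xtest X p i₁ iₙ) {iₙ}
      = resid X y iₙ * ((b1 + p * t) / (p + 1)
          + (1 - t)⁻¹ * t * ((b1 + p * t) / (p + 1))) := by
    rw [heff1, ← hb1, ← ht]
  -- the key algebraic identity
  have key : effect X y (xtest X p i₁ iₙ) {iₙ}
        - effect X y (xtest X p i₁ iₙ) {i, iₙ}
      = (ε / ((p + 1) * (1 - t) * D))
        * ((a1 * g * (1 - t) + g ^ 2 * b1) * p + (a1 * (1 - t) + g * b1) ^ 2) := by
    have hDne2 : (1 - s) * (1 - t) - g ^ 2 ≠ 0 := by rw [← hDdef]; exact hDne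
    have h0 : D - ((1 - s) * (1 - t) - g ^ 2) = 0 := by rw [hDdef]; ring
    rw [heff1', heff2, hri, hrn, eff1_compact b1 t ε p htne hp1ne,
      eff2_compact a1 b1 g s t ε p D hDne hp1ne, h0, hDdef]
    exact key_compact a1 b1 g s t ε p hDne2 htne hp1ne
  have hcpos : 0 < ε / ((p + 1) * (1 - t) * D) := by positivity
  rw [show effect X y (xtest X p i₁ iₙ) {i, iₙ}
        < effect X y (xtest X p i₁ iₙ) {iₙ}
      ↔ 0 < effect X y (xtest X p i₁ iₙ) {iₙ}
        - effect X y (xtest X p i₁ iₙ) {i, iₙ} from sub_pos.symm]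
  rw [key, mul_pos_iff_of_pos_left hcpos]
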